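/- Let G=(V,E) be a finite connected triangulation graph, i.e., E is covered by mutually edge-disjoint triangles t_1,…,t_m, and let G_Y be its triangle–star (∇–Y) transform, obtained by replacing the three edges of each triangle t_i by three edges to a new star vertex ϖ_i. Then restriction to V is a surjection from homomorphisms g on G_Y onto height functions h on G, and the number of homomorphisms restricting to a given h equals 2^{#{i : h is constant on the three corners of t_i}}. Moreover, denoting k_i(h) ∈ {0,1,3} the number of equal-height pairs among the three corners of t_i, one has ∏_{i=1}^m (√2)^{k_i(h)} = (√2)^m · 2^{#{i : h flat on t_i}}; hence the restriction of a uniform random homomorphism on G_Y has the law of the random Lipschitz model on G with constant edge weight c = √2. -/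

import Mathlib

lemma abs_sub_eq_one {v z : ℤ} : |v - z| = 1 ↔ z = v - 1 ∨ z = v + 1 := by
  rw [abs_eq (by norm_num : (0:ℤ) ≤ 1)]; omega

lemma star_card (v1 v2 v3 : ℤ) (p1 : v1 % 2 = 1) (p2 : v2 % 2 = 1) (p3 : v3 % 2 = 1)
    (d12 : |v1 - v2| ≤ 2) (d23 : |v2 - v3| ≤ 2) (d31 : |v3 - v1| ≤ 2) :
    (({v1 - 1, v1 + 1} ∩ ({v2 - 1, v2 + 1} ∩ {v3 - 1, v3 + 1}) : Finset ℤ)).card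
      = if v1 = v2 ∧ v2 = v3 then 2 else 1 := by
  rw [abs_le] at d12 d23 d31
  have hmem : ∀ z : ℤ, z ∈ ({v1 - 1, v1 + 1} ∩ ({v2 - 1, v2 + 1} ∩ {v3 - 1, v3 + 1}) : Finset ℤ)
      ↔ (z = v1 - 1 ∨ z = v1 + 1) ∧ (z = v2 - 1 ∨ z = v2 + 1) ∧ (z = v3 - 1 ∨ z = v3 + 1) := by
    intro z; simp [Finset.mem_inter]
  split_ifs with hf
  · obtain ⟨e1, e2⟩ := hf; subst e1; subst e2
    rw [Finset.inter_self, Finset.inter_self]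
    exact Finset.card_pair (by omega)
  · have hle : (({v1 - 1, v1 + 1} ∩ ({v2 - 1, v2 + 1} ∩ {v3 - 1, v3 + 1}) : Finset ℤ)).card ≤ 1 := by
      rw [Finset.card_le_one]
      intro z hz z' hz'
      rw [hmem] at hz hz'
      omega
    have hpos : 0 < (({v1 - 1, v1 + 1} ∩ ({v2 - 1, v2 + 1} ∩ {v3 - 1, v3 + 1}) : Finset ℤ)).card := by
      rw [Finset.card_pos]
      refine ⟨max (max v1 v2) v3 - 1, (hmem _).2 ?_⟩
      have h1 : v1 ≤ max (max v1 v2) v3 := le_trans (le_max_left _ _) (le_max_left _ _)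
      have h2 : v2 ≤ max (max v1 v2) v3 := le_trans (le_max_right _ _) (le_max_left _ _)
      have h3 : v3 ≤ max (max v1 v2) v3 := le_max_right _ _
      have hcase : max (max v1 v2) v3 = v1 ∨ max (max v1 v2) v3 = v2 ∨ max (max v1 v2) v3 = v3 := by
        rcases max_choice (max v1 v2) v3 with h | h
        · rcases max_choice v1 v2 with h' | h' <;> rw [h, h'] <;> tauto
        · tauto
      omega
    omega

lemma eqPairs_aux (v1 v2 v3 : ℤ) (p1 : v1 % 2 = 1) (p2 : v2 % 2 = 1) (p3 : v3 % 2 = 1)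
    (d12 : |v1 - v2| ≤ 2) (d23 : |v2 - v3| ≤ 2) (d31 : |v3 - v1| ≤ 2) :
    ((if v1 = v2 then 1 else 0) + (if v2 = v3 then 1 else 0) + (if v3 = v1 then 1 else 0) : ℕ)
      = if v1 = v2 ∧ v2 = v3 then 3 else 1 := by
  rw [abs_le] at d12 d23 d31
  split_ifs <;> omega

/-- The triangle–star (∇–Y) transform: each triangle `i` of the triangulation gets a new star
vertex adjacent to the three corners `a i`, `b i`, `c i`. -/
def starGraph {V ι : Type*} (a b c : ι → V) : SimpleGraph (V ⊕ ι) where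
  Adj x y :=
    (∃ (v : V) (i : ι), x = Sum.inl v ∧ y = Sum.inr i ∧ (v = a i ∨ v = b i ∨ v = c i)) ∨
    (∃ (v : V) (i : ι), x = Sum.inr i ∧ y = Sum.inl v ∧ (v = a i ∨ v = b i ∨ v = c i))
  symm := by
    constructor
    rintro x y (⟨v, i, rfl, rfl, hm⟩ | ⟨v, i, rfl, rfl, hm⟩)
    · exact Or.inr ⟨v, i, rfl, rfl, hm⟩
    · exact Or.inl ⟨v, i, rfl, rfl, hm⟩
  loopless := by
    constructor
    rintro x (⟨v, i, rfl, hy, hm⟩ | ⟨v, i, rfl, hy, hm⟩) <;> simp at hy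

/-- A graph homomorphism to `ℤ` on the ∇–Y transform: odd on the original vertices, even on the
star vertices, and changing by exactly one along each edge. -/
def IsStarHom {V ι : Type*} (a b c : ι → V) (g : V ⊕ ι → ℤ) : Prop :=
  (∀ v : V, Odd (g (Sum.inl v))) ∧ (∀ i : ι, Even (g (Sum.inr i))) ∧
    ∀ x y, (starGraph a b c).Adj x y → |g x - g y| = 1

/-- A height function: odd-valued and changing by at most 2 along edges. -/
def IsHeight {V : Type*} (G : SimpleGraph V) (h : V → ℤ) : Prop :=
  (∀ v, Odd (h v)) ∧ ∀ v w, G.Adj v w → |h v - h w| ≤ 2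

/-- The number of triangles on which `h` is flat (constant on the three corners). -/
def flatCount {V ι : Type*} [Fintype ι] (a b c : ι → V) (h : V → ℤ) : ℕ :=
  (Finset.univ.filter fun i : ι => h (a i) = h (b i) ∧ h (b i) = h (c i)).card

/-- The number of equal-height pairs among the three corners of triangle `i`. -/
def eqPairs {V ι : Type*} (a b c : ι → V) (h : V → ℤ) (i : ι) : ℕ :=
  (if h (a i) = h (b i) then 1 else 0) + (if h (b i) = h (c i) then 1 else 0) +
    (if h (c i) = h (a i) then 1 else 0)

theorem stmt_11 {V ι : Type*} [Fintype V] [DecidableEq V] [Fintype ι]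
    (G : SimpleGraph V) (hconn : G.Connected) (a b c : ι → V)
    (htri : ∀ i, s(a i, b i) ∈ G.edgeSet ∧ s(b i, c i) ∈ G.edgeSet ∧ s(c i, a i) ∈ G.edgeSet)
    (hdistinct : ∀ i, s(a i, b i) ≠ s(b i, c i) ∧ s(b i, c i) ≠ s(c i, a i) ∧
      s(c i, a i) ≠ s(a i, b i))
    (hcover : ∀ e ∈ G.edgeSet, ∃! i : ι, e = s(a i, b i) ∨ e = s(b i, c i) ∨ e = s(c i, a i))
    (Δ : Set V) (ξ : V → ℤ) :
    (∀ h : V → ℤ, IsHeight G h →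
      ∃ g : V ⊕ ι → ℤ, IsStarHom a b c g ∧ ∀ v, g (Sum.inl v) = h v) ∧
    (∀ h : V → ℤ, IsHeight G h →
      {g : V ⊕ ι → ℤ | IsStarHom a b c g ∧ ∀ v, g (Sum.inl v) = h v}.ncard
        = 2 ^ flatCount a b c h) ∧
    (∀ h : V → ℤ, IsHeight G h →
      (∏ i : ι, Real.sqrt 2 ^ eqPairs a b c h i)
        = Real.sqrt 2 ^ Fintype.card ι * 2 ^ flatCount a b c h) ∧
    (∀ h h' : V → ℤ, IsHeight G h → IsHeight G h' →
      (∀ v ∈ Δ, h v = ξ v) → (∀ v ∈ Δ, h' v = ξ v) →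
      ({g : V ⊕ ι → ℤ | IsStarHom a b c g ∧ ∀ v, g (Sum.inl v) = h v}.ncard : ℝ) *
          ∏ i : ι, Real.sqrt 2 ^ eqPairs a b c h' i
        = ({g : V ⊕ ι → ℤ | IsStarHom a b c g ∧ ∀ v, g (Sum.inl v) = h' v}.ncard : ℝ) *
          ∏ i : ι, Real.sqrt 2 ^ eqPairs a b c h i) := by
  classical
  -- basic facts for any height function
  have hfacts : ∀ h : V → ℤ, IsHeight G h → ∀ i : ι,
      h (a i) % 2 = 1 ∧ h (b i) % 2 = 1 ∧ h (c i) % 2 = 1 ∧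
      |h (a i) - h (b i)| ≤ 2 ∧ |h (b i) - h (c i)| ≤ 2 ∧ |h (c i) - h (a i)| ≤ 2 := by
    intro h hh i
    obtain ⟨hodd, hstep⟩ := hh
    exact ⟨Int.odd_iff.mp (hodd _), Int.odd_iff.mp (hodd _), Int.odd_iff.mp (hodd _),
      hstep _ _ (G.mem_edgeSet.mp (htri i).1), hstep _ _ (G.mem_edgeSet.mp (htri i).2.1),
      hstep _ _ (G.mem_edgeSet.mp (htri i).2.2)⟩
  have key2 : ∀ h : V → ℤ, IsHeight G h →
      {g : V ⊕ ι → ℤ | IsStarHom a b c g ∧ ∀ v, g (Sum.inl v) = h v}.ncard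
        = 2 ^ flatCount a b c h := by
    intro h hh
    set F : ι → Finset ℤ := fun i =>
      ({h (a i) - 1, h (a i) + 1} ∩ ({h (b i) - 1, h (b i) + 1} ∩ {h (c i) - 1, h (c i) + 1}) :
        Finset ℤ) with hF
    have hmem : ∀ i (z : ℤ), z ∈ F i ↔
        (z = h (a i) - 1 ∨ z = h (a i) + 1) ∧ (z = h (b i) - 1 ∨ z = h (b i) + 1) ∧
        (z = h (c i) - 1 ∨ z = h (c i) + 1) := by
      intro i z; simp [hF, Finset.mem_inter]
    have hsetq : {g : V ⊕ ι → ℤ | IsStarHom a b c g ∧ ∀ v, g (Sum.inl v) = h v}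
        = ↑((Fintype.piFinset F).image (fun s => Sum.elim h s)) := by
      ext g
      simp only [Set.mem_setOf_eq, Finset.coe_image, Set.mem_image, Finset.mem_coe,
        Fintype.mem_piFinset]
      constructor
      · rintro ⟨⟨go, ge, hedge⟩, hres⟩
        refine ⟨fun i => g (Sum.inr i), fun i => ?_, ?_⟩
        · rw [hmem]
          have h1 : |h (a i) - g (Sum.inr i)| = 1 := by
            rw [← hres (a i)]
            exact hedge _ _ (Or.inl ⟨a i, i, rfl, rfl, Or.inl rfl⟩)
          have h2 : |h (b i) - g (Sum.inr i)| = 1 := by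
            rw [← hres (b i)]
            exact hedge _ _ (Or.inl ⟨b i, i, rfl, rfl, Or.inr (Or.inl rfl)⟩)
          have h3 : |h (c i) - g (Sum.inr i)| = 1 := by
            rw [← hres (c i)]
            exact hedge _ _ (Or.inl ⟨c i, i, rfl, rfl, Or.inr (Or.inr rfl)⟩)
          exact ⟨abs_sub_eq_one.mp h1, abs_sub_eq_one.mp h2, abs_sub_eq_one.mp h3⟩
        · funext x
          cases x with
          | inl v => exact (hres v).symm
          | inr i => rfl
      · rintro ⟨s, hs, rfl⟩
        refine ⟨⟨fun v => (hh.1 v), fun i => ?_, ?_⟩, fun v => rfl⟩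
        · have := (hmem i (s i)).mp (hs i)
          have hp := (hfacts h hh i).1
          simp only [Sum.elim_inr]
          rw [Int.even_iff]
          omega
        · rintro x y (⟨v, i, rfl, rfl, hm⟩ | ⟨v, i, rfl, rfl, hm⟩)
          · have := (hmem i (s i)).mp (hs i)
            simp only [Sum.elim_inl, Sum.elim_inr]
            rw [abs_sub_eq_one]
            rcases hm with rfl | rfl | rfl <;> tauto
          · have := (hmem i (s i)).mp (hs i)
            simp only [Sum.elim_inl, Sum.elim_inr]
            rw [abs_sub_comm, abs_sub_eq_one]
            rcases hm with rfl | rfl | rfl <;> tauto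
    have hinj : Function.Injective (fun s : ι → ℤ => Sum.elim h s) := by
      intro s s' he
      funext i
      exact congrFun he (Sum.inr i)
    rw [hsetq, Set.ncard_coe_finset, Finset.card_image_of_injective _ hinj,
      Fintype.card_piFinset]
    have hcard : ∀ i, (F i).card = if h (a i) = h (b i) ∧ h (b i) = h (c i) then 2 else 1 := by
      intro i
      obtain ⟨p1, p2, p3, d12, d23, d31⟩ := hfacts h hh i
      exact star_card _ _ _ p1 p2 p3 d12 d23 d31
    rw [Finset.prod_congr rfl (fun i _ => hcard i), Finset.prod_ite]
    simp [flatCount]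
  have key3 : ∀ h : V → ℤ, IsHeight G h →
      (∏ i : ι, Real.sqrt 2 ^ eqPairs a b c h i)
        = Real.sqrt 2 ^ Fintype.card ι * 2 ^ flatCount a b c h := by
    intro h hh
    have heq : ∀ i, eqPairs a b c h i = if h (a i) = h (b i) ∧ h (b i) = h (c i) then 3 else 1 := by
      intro i
      obtain ⟨p1, p2, p3, d12, d23, d31⟩ := hfacts h hh i
      exact eqPairs_aux _ _ _ p1 p2 p3 d12 d23 d31
    have hterm : ∀ i, (Real.sqrt 2 : ℝ) ^ eqPairs a b c h i
        = Real.sqrt 2 * (if h (a i) = h (b i) ∧ h (b i) = h (c i) then (2:ℝ) else 1) := by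
      intro i
      rw [heq i]
      split_ifs
      · rw [show (3:ℕ) = 2 + 1 from rfl, pow_succ, Real.sq_sqrt (by norm_num : (2:ℝ) ≥ 0)]
        ring
      · rw [pow_one, mul_one]
    rw [Finset.prod_congr rfl (fun i _ => hterm i), Finset.prod_mul_distrib,
      Finset.prod_const, Finset.prod_ite]
    simp [flatCount, Finset.card_univ]
  refine ⟨?_, key2, key3, ?_⟩
  · intro h hh
    have hne : {g : V ⊕ ι → ℤ | IsStarHom a b c g ∧ ∀ v, g (Sum.inl v) = h v}.ncard ≠ 0 := by
      rw [key2 h hh]; positivity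
    obtain ⟨g, hg⟩ := Set.nonempty_of_ncard_ne_zero hne
    exact ⟨g, hg⟩
  · intro h h' hh hh' _ _
    rw [key2 h hh, key2 h' hh', key3 h hh, key3 h' hh']
    push_cast
    ring
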